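/- Suppose the null hypothesis Y ⊥ X | Z holds, and the resamples X^(1), ..., X^(B) are drawn i.i.d. from the conditional distribution of X given Z, conditionally independent of (X, Y) given Z. Then the B+1 random vectors (X, Y, Z), (X^(1), Y, Z), ..., (X^(B), Y, Z) are exchangeable in their first coordinates, i.e., conditionally on (Y,Z), the vector (X, X^(1), ..., X^(B)) is exchangeable. -/
import Mathlib


open Finset

open Classical in
/-- Probability of an event `S` under the weight function `p` on a finite sample space. -/
noncomputable def Pr {Ω : Type*} [Fintype Ω] (p : Ω → ℝ) (S : Ω → Prop) : ℝ :=
  ∑ ω, if S ω then p ω else 0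

open Classical in
lemma Pr_congr {Ω : Type*} [Fintype Ω] (p : Ω → ℝ) {S T : Ω → Prop}
    (h : ∀ ω, S ω ↔ T ω) : Pr p S = Pr p T := by
  unfold Pr
  exact Finset.sum_congr rfl fun ω _ => by rw [iff_iff_eq.mp (h ω)]

theorem stmt5 {Ω 𝒳 𝒴 𝒵 : Type*} [Fintype Ω] [Fintype 𝒳] [Fintype 𝒴] [Fintype 𝒵]
    (p : Ω → ℝ) (hp : ∀ ω, 0 ≤ p ω) (hp1 : ∑ ω, p ω = 1)
    (X : Ω → 𝒳) (Y : Ω → 𝒴) (Z : Ω → 𝒵) (B : ℕ) (Xs : Fin B → Ω → 𝒳)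
    -- null hypothesis: Y ⊥ X | Z
    (hCI : ∀ (y : 𝒴) (x : 𝒳) (z : 𝒵), 0 < Pr p (fun ω => Z ω = z) →
      Pr p (fun ω => Y ω = y ∧ X ω = x ∧ Z ω = z) / Pr p (fun ω => Z ω = z)
        = (Pr p (fun ω => Y ω = y ∧ Z ω = z) / Pr p (fun ω => Z ω = z))
          * (Pr p (fun ω => X ω = x ∧ Z ω = z) / Pr p (fun ω => Z ω = z)))
    -- X^(1),...,X^(B) are i.i.d. from the conditional law of X given Z,
    -- conditionally independent of (X, Y) given Z
    (hresample : ∀ (z : 𝒵), 0 < Pr p (fun ω => Z ω = z) →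
      ∀ (x : 𝒳) (y : 𝒴) (v : Fin B → 𝒳),
        Pr p (fun ω => X ω = x ∧ Y ω = y ∧ (∀ b, Xs b ω = v b) ∧ Z ω = z)
            / Pr p (fun ω => Z ω = z)
          = (Pr p (fun ω => X ω = x ∧ Y ω = y ∧ Z ω = z) / Pr p (fun ω => Z ω = z))
            * ∏ b, (Pr p (fun ω => X ω = v b ∧ Z ω = z) / Pr p (fun ω => Z ω = z))) :
    -- conclusion: conditionally on (Y,Z), the vector (X, X^(1), ..., X^(B)) is exchangeable
    ∀ (π : Equiv.Perm (Fin (B + 1))) (y : 𝒴) (z : 𝒵), 0 < Pr p (fun ω => Z ω = z) →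
      ∀ v : Fin (B + 1) → 𝒳,
        Pr p (fun ω => Y ω = y ∧ Z ω = z ∧ ∀ i, Fin.cons (α := fun _ : Fin (B + 1) => Ω → 𝒳) X Xs (π i) ω = v i)
          = Pr p (fun ω => Y ω = y ∧ Z ω = z ∧ ∀ i, Fin.cons (α := fun _ : Fin (B + 1) => Ω → 𝒳) X Xs i ω = v i) := by
  intro π y z hz v
  set Pz := Pr p (fun ω => Z ω = z) with hPz
  have hzne : Pz ≠ 0 := ne_of_gt hz
  -- key formula
  have key : ∀ w : Fin (B + 1) → 𝒳,
      Pr p (fun ω => Y ω = y ∧ Z ω = z ∧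
          ∀ i, Fin.cons (α := fun _ : Fin (B + 1) => Ω → 𝒳) X Xs i ω = w i)
        = Pz * ((Pr p (fun ω => Y ω = y ∧ Z ω = z) / Pz)
            * ∏ i, (Pr p (fun ω => X ω = w i ∧ Z ω = z) / Pz)) := by
    intro w
    have hcongr : Pr p (fun ω => Y ω = y ∧ Z ω = z ∧
          ∀ i, Fin.cons (α := fun _ : Fin (B + 1) => Ω → 𝒳) X Xs i ω = w i)
        = Pr p (fun ω => X ω = w 0 ∧ Y ω = y ∧ (∀ b, Xs b ω = w b.succ) ∧ Z ω = z) := by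
      apply Pr_congr
      intro ω
      rw [Fin.forall_fin_succ]
      simp only [Fin.cons_zero, Fin.cons_succ]
      tauto
    have hres := hresample z hz (w 0) y (fun b => w b.succ)
    have hxy : Pr p (fun ω => X ω = w 0 ∧ Y ω = y ∧ Z ω = z)
        = Pr p (fun ω => Y ω = y ∧ X ω = w 0 ∧ Z ω = z) := by
      apply Pr_congr; intro ω; tauto
    have hci := hCI y (w 0) z hz
    rw [div_eq_iff hzne] at hres
    rw [hcongr, hres, hxy, ← hPz, hci, Fin.prod_univ_succ]
    ring
  rw [key v]
  have hL : Pr p (fun ω => Y ω = y ∧ Z ω = z ∧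
        ∀ i, Fin.cons (α := fun _ : Fin (B + 1) => Ω → 𝒳) X Xs (π i) ω = v i)
      = Pr p (fun ω => Y ω = y ∧ Z ω = z ∧
        ∀ i, Fin.cons (α := fun _ : Fin (B + 1) => Ω → 𝒳) X Xs i ω = v (π.symm i)) := by
    apply Pr_congr
    intro ω
    constructor
    · rintro ⟨h1, h2, h3⟩
      refine ⟨h1, h2, fun i => ?_⟩
      have := h3 (π.symm i)
      rwa [Equiv.apply_symm_apply] at this
    · rintro ⟨h1, h2, h3⟩
      refine ⟨h1, h2, fun i => ?_⟩
      have := h3 (π i)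
      rwa [Equiv.symm_apply_apply] at this
  rw [hL, key (fun i => v (π.symm i))]
  congr 2
  exact Equiv.prod_comp π.symm (fun i => Pr p (fun ω => X ω = v i ∧ Z ω = z) / Pz)
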